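/- The second incompleteness theorem fails for the Rosser provability predicate: if T is a recursively axiomatized consistent extension of PA, then T proves Con^R(T), where Con^R(T) := ¬Pr^R_T(⌜0≠0⌝). -/

import Mathlib

open FirstOrder Language BoundedFormula

/-- The function symbols of the language of arithmetic: `0, S, +, ×`. -/
inductive ArithFunc : ℕ → Type
  | zero : ArithFunc 0
  | succ : ArithFunc 1
  | add : ArithFunc 2
  | mul : ArithFunc 2

/-- The first-order language of arithmetic `{0, S, +, ×}`. -/
def Larith : Language := ⟨ArithFunc, fun _ => Empty⟩

abbrev zero' {α : Type} : Larith.Term α := Term.func ArithFunc.zero ![]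
abbrev succ' {α : Type} (t : Larith.Term α) : Larith.Term α := Term.func ArithFunc.succ ![t]
abbrev add' {α : Type} (t s : Larith.Term α) : Larith.Term α := Term.func ArithFunc.add ![t, s]
abbrev mul' {α : Type} (t s : Larith.Term α) : Larith.Term α := Term.func ArithFunc.mul ![t, s]

/-- The numeral `S^n(0)`. -/
def numeral {α : Type} : ℕ → Larith.Term α
  | 0 => zero'
  | n + 1 => succ' (numeral n)

/-- Substitution of a numeral for the unique free variable of a formula. -/
def substNum (φ : Larith.Formula (Fin 1)) (n : ℕ) : Larith.Sentence :=
  φ.subst fun _ => numeral n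

/-- Substitution of numerals for the two free variables of a formula. -/
def substNum2 (φ : Larith.Formula (Fin 2)) (m n : ℕ) : Larith.Sentence :=
  φ.subst ![numeral m, numeral n]

/-- Existential quantification of a formula with one free variable, as a sentence. -/
def toBF1 (φ : Larith.Formula (Fin 1)) : Larith.BoundedFormula Empty 1 :=
  BoundedFormula.relabel (fun _ => Sum.inr (0 : Fin 1)) φ

def exQ (φ : Larith.Formula (Fin 1)) : Larith.Sentence :=
  BoundedFormula.ex (toBF1 φ)

/-- Universal quantification of a formula with one free variable, as a sentence. -/
def allQ (φ : Larith.Formula (Fin 1)) : Larith.Sentence :=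
  BoundedFormula.all (toBF1 φ)

/-- `T` proves the sentence `φ` (via the completeness theorem, provability is
semantic consequence). -/
def Proves (T : Larith.Theory) (φ : Larith.Sentence) : Prop :=
  T ⊨ᵇ φ

/-- `T` is consistent: it does not prove a contradiction. -/
def Consistent (T : Larith.Theory) : Prop :=
  ¬ Proves T BoundedFormula.falsum

/-- `T` is ω-consistent: there is no formula `φ(x)` such that `T ⊢ ∃x φ(x)` and
`T ⊢ ¬φ(n̄)` for every natural number `n`. -/
def OmegaConsistent (T : Larith.Theory) : Prop :=
  ¬ ∃ φ : Larith.Formula (Fin 1),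
      Proves T (exQ φ) ∧ ∀ n : ℕ, Proves T (substNum φ n).not

-- extension chunk to test
instance : ∀ n, DecidableEq (ArithFunc n) := fun _ a b => by
  cases a <;> cases b <;> first | exact isTrue rfl | exact isFalse (by intro h; cases h)

instance : Countable (Σ l, Larith.Functions l) := by
  have : Function.Injective (fun f : Σ l, Larith.Functions l =>
    match f with
    | ⟨_, ArithFunc.zero⟩ => (0 : ℕ)
    | ⟨_, ArithFunc.succ⟩ => 1
    | ⟨_, ArithFunc.add⟩ => 2
    | ⟨_, ArithFunc.mul⟩ => 3) := by
    rintro ⟨i, f⟩ ⟨j, g⟩ h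
    cases f <;> cases g <;> simp_all
  exact this.countable

instance : ∀ n, IsEmpty (Larith.Relations n) := fun _ => ⟨fun r => r.elim⟩

instance : Countable (Σ l, Larith.Relations l) :=
  ⟨⟨fun x => x.2.elim, fun x => x.2.elim⟩⟩

instance : Countable Larith.Sentence := by
  have : Function.Injective (fun φ : Larith.Sentence =>
      (⟨0, φ⟩ : Σ n, Larith.BoundedFormula Empty n)) := by
    intro φ ψ h
    simpa using h
  have h2 := (BoundedFormula.listEncode_sigma_injective
    (L := Larith) (α := Empty)).comp this
  exact h2.countable

noncomputable instance : Encodable Larith.Sentence := Encodable.ofCountable _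

/-- A fixed Gödel numbering of sentences. -/
noncomputable def gnum (φ : Larith.Sentence) : ℕ := Encodable.encode φ

/-- The sentence `0 ≠ 0`. -/
def falseEq : Larith.Sentence := ∼(zero' =' zero')

def q1 : Larith.Sentence := ∀' ∀' ((succ' &0 =' succ' &1) ⟹ (&0 =' &1))
def q2 : Larith.Sentence := ∀' ∼(succ' &0 =' zero')
def q3 : Larith.Sentence := ∀' (∼(&0 =' zero') ⟹ ∃' (&0 =' succ' &1))
def q4 : Larith.Sentence := ∀' (add' &0 zero' =' &0)
def q5 : Larith.Sentence := ∀' ∀' (add' &0 (succ' &1) =' succ' (add' &0 &1))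
def q6 : Larith.Sentence := ∀' (mul' &0 zero' =' zero')
def q7 : Larith.Sentence := ∀' ∀' (mul' &0 (succ' &1) =' add' (mul' &0 &1) &0)

/-- Robinson arithmetic `Q`. -/
def RobinsonQ : Larith.Theory := {q1, q2, q3, q4, q5, q6, q7}

/-- The induction axiom for a formula `φ` with free variable `&m` (the last
de Bruijn variable) and parameters `&0, …, &(m-1)`, universally closed. -/
def indAxiom (m : ℕ) (φ : Larith.BoundedFormula Empty (m + 1)) : Larith.Sentence :=
  BoundedFormula.alls
    ((∀' ((&(Fin.last m) =' zero') ⟹ φ)) ⟹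
      ((∀' (φ ⟹ ∀' ((&(Fin.last (m + 1)) =' succ' &((Fin.last m).castSucc)) ⟹
          φ.liftAt 1 m))) ⟹
        ∀' φ))

/-- Peano arithmetic `PA`: the axioms of `Q` (except `Q₃`) together with the
induction scheme. -/
def PA : Larith.Theory :=
  {q1, q2, q4, q5, q6, q7} ∪ ⋃ m : ℕ, Set.range (indAxiom m)

/-- `T` has a recursive set of axioms. -/
def RecursivelyAxiomatized (T : Larith.Theory) : Prop :=
  ComputablePred fun n : ℕ => ∃ φ ∈ T, gnum φ = n

/-- The set of Gödel numbers of theorems of `T` is recursive. -/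
def DecidableTheory (T : Larith.Theory) : Prop :=
  ComputablePred fun n : ℕ => ∃ φ : Larith.Sentence, gnum φ = n ∧ Proves T φ

/-- The standard model of arithmetic. -/
instance : Larith.Structure ℕ where
  funMap {n} f args :=
    match f with
    | ArithFunc.zero => 0
    | ArithFunc.succ => args 0 + 1
    | ArithFunc.add => args 0 + args 1
    | ArithFunc.mul => args 0 * args 1
  RelMap {n} r _ := r.elim

/-- Truth in the standard model of arithmetic. -/
def TrueInN (φ : Larith.Sentence) : Prop := Sentence.Realize ℕ φ


/-- The Rosser provability predicate
`Pr^R(x) := ∃y (Prf(x,y) ∧ ∀z ≤ y ∀x' (Neg(x,x') → ¬Prf(x',z)))`,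
where `z ≤ y` is expressed as `∃w (z + w = y)` and `Neg` represents the
function computing the code of the negation of a formula. -/
def rosserPr (Prf NegF : Larith.Formula (Fin 2)) : Larith.Formula (Fin 1) :=
  BoundedFormula.ex
    ((BoundedFormula.relabel (![Sum.inl 0, Sum.inr 0] : Fin 2 → Fin 1 ⊕ Fin 1) Prf :
        Larith.BoundedFormula (Fin 1) 1) ⊓
      ∀' ((∃' (add' &1 &2 =' &0)) ⟹
        ∀' ((BoundedFormula.relabel (![Sum.inl 0, Sum.inr 2] : Fin 2 → Fin 1 ⊕ Fin 3) NegF :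
              Larith.BoundedFormula (Fin 1) 3) ⟹
          ∼(BoundedFormula.relabel (![Sum.inr 2, Sum.inr 1] : Fin 2 → Fin 1 ⊕ Fin 3) Prf :
              Larith.BoundedFormula (Fin 1) 3))))

section Aux
variable (M : Type) [Larith.Structure M]

def z0 : M := Structure.funMap (L := Larith) ArithFunc.zero ![]
def sM (a : M) : M := Structure.funMap (L := Larith) ArithFunc.succ ![a]
def aM (a b : M) : M := Structure.funMap (L := Larith) ArithFunc.add ![a, b]

variable {M}

@[simp] lemma realize_zero' {α : Type} (v : α → M) :
    Term.realize v (zero' : Larith.Term α) = z0 M := by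
  simp only [z0, Term.realize]
  congr 1; exact funext fun i => i.elim0

@[simp] lemma realize_succ' {α : Type} (v : α → M) (t : Larith.Term α) :
    Term.realize v (succ' t) = sM M (t.realize v) := by
  simp only [sM, Term.realize]
  congr 1; funext i; fin_cases i; rfl

@[simp] lemma realize_add' {α : Type} (v : α → M) (t s : Larith.Term α) :
    Term.realize v (add' t s) = aM M (t.realize v) (s.realize v) := by
  simp only [aM, Term.realize]
  congr 1; funext i; fin_cases i <;> rfl

lemma q4_realize (h : M ⊨ q4) : ∀ a : M, aM M a (z0 M) = a := by
  intro a
  simp only [q4, Sentence.Realize, Formula.Realize, BoundedFormula.realize_all,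
    realize_bdEqual, realize_add', realize_zero'] at h
  simpa [Fin.snoc] using h a

lemma q5_realize (h : M ⊨ q5) : ∀ a b : M, aM M a (sM M b) = sM M (aM M a b) := by
  intro a b
  simp only [q5, Sentence.Realize, Formula.Realize, BoundedFormula.realize_all,
    realize_bdEqual, realize_add', realize_succ'] at h
  simpa [Fin.snoc] using h a b
end Aux

section AuxFun
variable {M : Type} [Larith.Structure M]

@[simp] lemma funMap_zero (f : Fin 0 → M) :
    Structure.funMap (L := Larith) ArithFunc.zero f = z0 M := by
  unfold z0; congr; exact funext fun i => i.elim0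

@[simp] lemma funMap_succ (f : Fin 1 → M) :
    Structure.funMap (L := Larith) ArithFunc.succ f = sM M (f 0) := by
  unfold sM; congr; funext i; fin_cases i; rfl

@[simp] lemma funMap_add (f : Fin 2 → M) :
    Structure.funMap (L := Larith) ArithFunc.add f = aM M (f 0) (f 1) := by
  unfold aM; congr; funext i; fin_cases i <;> rfl
end AuxFun
section Aux2
variable {M : Type} [Larith.Structure M]

omit [Larith.Structure M] in
@[simp] lemma snoc_fin0 (a : M) : Fin.snoc (default : Fin 0 → M) a = ![a] := by
  funext i; fin_cases i; simp [Fin.snoc]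

omit [Larith.Structure M] in
@[simp] lemma snoc_fin1 (xs : Fin 1 → M) (a : M) : Fin.snoc xs a = ![xs 0, a] := by
  funext i; fin_cases i <;> simp [Fin.snoc] <;> rfl

omit [Larith.Structure M] in
@[simp] lemma snoc_fin2 (xs : Fin 2 → M) (a : M) : Fin.snoc xs a = ![xs 0, xs 1, a] := by
  funext i; fin_cases i <;> simp [Fin.snoc] <;> rfl

omit [Larith.Structure M] in
@[simp] lemma mat_last0 (a : M) : ![a] (Fin.last 0) = a := rfl
omit [Larith.Structure M] in
@[simp] lemma mat_last1 (a b : M) : ![a, b] (Fin.last 1) = b := rfl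
omit [Larith.Structure M] in
@[simp] lemma mat_last2 (a b c : M) : ![a, b, c] (Fin.last 2) = c := rfl
omit [Larith.Structure M] in
@[simp] lemma mat_cast0 (a b : M) : ![a, b] ((Fin.last 0).castSucc) = a := rfl
omit [Larith.Structure M] in
@[simp] lemma mat_cast1 (a b c : M) : ![a, b, c] ((Fin.last 1).castSucc) = b := rfl

lemma ind0_realize (φ : Larith.BoundedFormula Empty 1) (h : M ⊨ indAxiom 0 φ)
    (base : φ.Realize (default : Empty → M) ![z0 M])
    (step : ∀ x : M, φ.Realize (default : Empty → M) ![x] →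
      φ.Realize (default : Empty → M) ![sM M x]) :
    ∀ x : M, φ.Realize (default : Empty → M) ![x] := by
  intro x
  simp only [indAxiom, BoundedFormula.alls, Sentence.Realize, Formula.Realize,
    BoundedFormula.realize_imp, BoundedFormula.realize_all, realize_bdEqual,
    realize_succ', realize_zero', Term.realize_var, Function.comp, Sum.elim_inr,
    snoc_fin0, snoc_fin1, snoc_fin2, Matrix.cons_val_zero, Matrix.cons_val_one,
    Matrix.head_cons, mat_last0, mat_last1, mat_last2, mat_cast0, mat_cast1] at h
  refine h (fun a ha => ?_) (fun a ha b hb => ?_) x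
  · rw [ha]; exact base
  · rw [BoundedFormula.realize_liftAt_one (Nat.zero_le 1)]
    have heq : (![a, b] ∘ fun i : Fin 1 => if (i : ℕ) < 0 then Fin.castSucc i else i.succ)
        = ![b] := by
      funext i; fin_cases i; simp
    have hb' : b = sM M a := by simpa using hb
    rw [heq, hb']
    exact step a ha

lemma ind1_realize (φ : Larith.BoundedFormula Empty 2) (h : M ⊨ indAxiom 1 φ)
    (base : ∀ p : M, φ.Realize (default : Empty → M) ![p, z0 M])
    (step : ∀ p x : M, φ.Realize (default : Empty → M) ![p, x] →
      φ.Realize (default : Empty → M) ![p, sM M x]) :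
    ∀ p x : M, φ.Realize (default : Empty → M) ![p, x] := by
  intro p x
  simp only [indAxiom, BoundedFormula.alls, Sentence.Realize, Formula.Realize,
    BoundedFormula.realize_alls, BoundedFormula.realize_imp, BoundedFormula.realize_all,
    realize_bdEqual, realize_succ', realize_zero', Term.realize_var, Function.comp,
    Sum.elim_inr, snoc_fin0, snoc_fin1, snoc_fin2, Matrix.cons_val_zero, Matrix.cons_val_one,
    Matrix.head_cons, mat_last0, mat_last1, mat_last2, mat_cast0, mat_cast1] at h
  refine h p (fun a ha => ?_) (fun a ha b hb => ?_) x
  · rw [ha]; exact base p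
  · rw [BoundedFormula.realize_liftAt_one (by norm_num : 1 ≤ 2)]
    have heq : (![p, a, b] ∘
        fun i : Fin 2 => if (i : ℕ) < 1 then Fin.castSucc i else i.succ)
        = ![p, b] := by
      funext i; fin_cases i <;> simp <;> rfl
    have hb' : b = sM M a := by simpa using hb
    rw [heq, hb']
    exact step p a ha
end Aux2
def psiZeroAdd : Larith.BoundedFormula Empty 1 := add' zero' &0 =' &0
def psiCases : Larith.BoundedFormula Empty 1 := (&0 =' zero') ⊔ (∃' (&0 =' succ' &1))
def psiSuccAdd : Larith.BoundedFormula Empty 2 := add' (succ' &0) &1 =' succ' (add' &0 &1)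

section Aux3
variable {M : Type} [Larith.Structure M]

def NmM (M : Type) [Larith.Structure M] (n : ℕ) : M :=
  (numeral n : Larith.Term Empty).realize (fun e => e.elim)

@[simp] lemma realize_numeral {α : Type} (v : α → M) (n : ℕ) :
    (numeral n : Larith.Term α).realize v = NmM M n := by
  induction n with
  | zero =>
    rw [show (numeral 0 : Larith.Term α) = zero' from rfl, realize_zero']
    rw [show NmM M 0 = Term.realize (fun e : Empty => e.elim) (numeral 0) from rfl,
      show (numeral 0 : Larith.Term Empty) = zero' from rfl, realize_zero']
  | succ n ih =>
    rw [show (numeral (n+1) : Larith.Term α) = succ' (numeral n) from rfl, realize_succ', ih]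
    rw [show NmM M (n+1) = Term.realize (fun e : Empty => e.elim) (numeral (n+1)) from rfl,
      show (numeral (n+1) : Larith.Term Empty) = succ' (numeral n) from rfl, realize_succ']
    rfl

lemma NmM_zero : NmM M 0 = z0 M := by
  rw [show NmM M 0 = Term.realize (fun e : Empty => e.elim) (numeral 0) from rfl,
    show (numeral 0 : Larith.Term Empty) = zero' from rfl, realize_zero']

lemma NmM_succ (n : ℕ) : NmM M (n + 1) = sM M (NmM M n) := by
  rw [show NmM M (n+1) = Term.realize (fun e : Empty => e.elim) (numeral (n+1)) from rfl,
    show (numeral (n+1) : Larith.Term Empty) = succ' (numeral n) from rfl, realize_succ']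
  rfl

lemma zero_add_M (hq4 : M ⊨ q4) (hq5 : M ⊨ q5) (hind : M ⊨ indAxiom 0 psiZeroAdd) :
    ∀ y : M, aM M (z0 M) y = y := by
  have key := ind0_realize psiZeroAdd hind ?_ ?_
  · intro y
    simpa [psiZeroAdd, Term.realize] using key y
  · simpa [psiZeroAdd, Term.realize] using q4_realize hq4 (z0 M)
  · intro x hx
    simp only [psiZeroAdd, realize_bdEqual, Term.realize, funMap_add, funMap_zero,
      Sum.elim_inr, Function.comp, Matrix.cons_val_zero, Matrix.cons_val_one,
      Matrix.head_cons, Matrix.cons_val_fin_one] at hx ⊢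
    rw [q5_realize hq5, hx]

lemma cases_M (hind : M ⊨ indAxiom 0 psiCases) :
    ∀ y : M, y = z0 M ∨ ∃ w : M, y = sM M w := by
  have key := ind0_realize psiCases hind ?_ ?_
  · intro y
    simpa [psiCases, Term.realize] using key y
  · simp [psiCases, Term.realize]
  · intro x _
    simp only [psiCases, BoundedFormula.realize_sup, BoundedFormula.realize_ex,
      realize_bdEqual, Term.realize, funMap_zero, funMap_succ, Sum.elim_inr,
      Function.comp, snoc_fin1, Matrix.cons_val_zero, Matrix.cons_val_one, Matrix.head_cons]
    exact Or.inr ⟨x, rfl⟩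

lemma succ_add_M (hq4 : M ⊨ q4) (hq5 : M ⊨ q5) (hind : M ⊨ indAxiom 1 psiSuccAdd) :
    ∀ a y : M, aM M (sM M a) y = sM M (aM M a y) := by
  have key := ind1_realize psiSuccAdd hind ?_ ?_
  · intro a y
    simpa [psiSuccAdd, Term.realize] using key a y
  · intro p
    simp only [psiSuccAdd, realize_bdEqual, Term.realize, funMap_add, funMap_succ,
      Sum.elim_inr, Function.comp, Matrix.cons_val_zero, Matrix.cons_val_one,
      Matrix.head_cons, funMap_zero]
    rw [q4_realize hq4, q4_realize hq4]
  · intro p x hx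
    simp only [psiSuccAdd, realize_bdEqual, Term.realize, funMap_add, funMap_succ,
      Sum.elim_inr, Function.comp, Matrix.cons_val_zero, Matrix.cons_val_one,
      Matrix.head_cons] at hx ⊢
    rw [q5_realize hq5, q5_realize hq5, hx]

lemma dichotomy_M (hq4 : M ⊨ q4) (hq5 : M ⊨ q5)
    (hi1 : M ⊨ indAxiom 0 psiZeroAdd) (hi2 : M ⊨ indAxiom 0 psiCases)
    (hi3 : M ⊨ indAxiom 1 psiSuccAdd) (n : ℕ) :
    ∀ y : M, (∃ w : M, aM M (NmM M n) w = y) ∨ ∃ k : ℕ, y = NmM M k := by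
  induction n with
  | zero =>
    intro y
    exact Or.inl ⟨y, by rw [NmM_zero, zero_add_M hq4 hq5 hi1]⟩
  | succ n ih =>
    intro y
    rcases ih y with ⟨w, hw⟩ | hk
    · rcases cases_M hi2 w with h0 | ⟨w', hw'⟩
      · refine Or.inr ⟨n, ?_⟩
        rw [← hw, h0, q4_realize hq4]
      · refine Or.inl ⟨w', ?_⟩
        rw [NmM_succ, succ_add_M hq4 hq5 hi3, ← hw, hw', q5_realize hq5]
    · exact Or.inr hk
end Aux3
section Aux4
variable {M : Type} [Larith.Structure M]

omit [Larith.Structure M] in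
@[simp] lemma mat3_two (a b c : M) : ![a, b, c] 2 = c := rfl

lemma bf_to_formula (P : Larith.Formula (Fin 2)) {w w' : Fin 2 → M} {xs : Fin 0 → M}
    (hw : w = w') (h : BoundedFormula.Realize P w xs) : P.Realize w' := by
  rw [Formula.Realize, ← hw, Subsingleton.elim (default : Fin 0 → M) xs]
  exact h

lemma formula_to_bf (P : Larith.Formula (Fin 2)) {w w' : Fin 2 → M} {xs : Fin 0 → M}
    (hw : w = w') (h : P.Realize w') : BoundedFormula.Realize P w xs := by
  rw [show w = w' from hw, Subsingleton.elim xs (default : Fin 0 → M)]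
  exact h

lemma realize_substNum2 (P : Larith.Formula (Fin 2)) (m n : ℕ) :
    (M ⊨ substNum2 P m n) ↔ P.Realize (M := M) ![NmM M m, NmM M n] := by
  have hv : (fun a => Term.realize (default : Empty → M)
      ((![numeral m, numeral n] : Fin 2 → Larith.Term Empty) a)) = ![NmM M m, NmM M n] := by
    funext a; fin_cases a <;> simp
  simp only [substNum2, Sentence.Realize, Formula.Realize, BoundedFormula.realize_subst, hv]

lemma realize_rosser (P Ng : Larith.Formula (Fin 2)) (c : ℕ)
    (h : M ⊨ substNum (rosserPr P Ng) c) :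
    ∃ a : M, P.Realize ![NmM M c, a] ∧
      ∀ z : M, (∃ w : M, aM M z w = a) →
        ∀ x' : M, Ng.Realize ![NmM M c, x'] → ¬ P.Realize ![x', z] := by
  simp only [substNum, rosserPr, Sentence.Realize, Formula.Realize,
    BoundedFormula.realize_subst, BoundedFormula.realize_ex, BoundedFormula.realize_inf,
    BoundedFormula.realize_all, BoundedFormula.realize_imp, BoundedFormula.realize_not,
    BoundedFormula.realize_relabel, realize_bdEqual, Term.realize_var, realize_add',
    snoc_fin0, snoc_fin1, snoc_fin2, realize_numeral, Matrix.cons_val_zero,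
    Matrix.cons_val_one, Matrix.head_cons, mat3_two, Function.comp,
    Sum.elim_inl, Sum.elim_inr] at h
  obtain ⟨a, h1, h2⟩ := h
  refine ⟨a, ?_, ?_⟩
  · refine bf_to_formula P ?_ h1
    funext i; fin_cases i <;> rfl
  · intro z hz x' hx
    obtain ⟨w, hw⟩ := hz
    have h3 := h2 z ⟨w, ?_⟩ x' ?_
    · intro hP
      refine h3 ?_
      refine formula_to_bf P ?_ hP
      funext i; fin_cases i <;> rfl
    · simpa using hw
    · refine formula_to_bf Ng ?_ hx
      funext i; fin_cases i <;> rfl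
end Aux4
lemma proves_realize {T : Larith.Theory} {σ : Larith.Sentence} (h : Proves T σ)
    (M : T.ModelType) : (M : Type) ⊨ σ :=
  h.realize_sentence M

lemma pa_realize {T : Larith.Theory} (hPA : PA ⊆ T) (M : T.ModelType)
    {σ : Larith.Sentence} (hσ : σ ∈ PA) : (M : Type) ⊨ σ :=
  Theory.realize_sentence_of_mem T (hPA hσ)

lemma q4_mem : q4 ∈ PA := by simp [PA]
lemma q5_mem : q5 ∈ PA := by simp [PA]
lemma ind_mem (m : ℕ) (φ : Larith.BoundedFormula Empty (m + 1)) : indAxiom m φ ∈ PA :=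
  Set.mem_union_right _ (Set.mem_iUnion.2 ⟨m, Set.mem_range_self φ⟩)

/-- G2 fails for the Rosser provability predicate: a recursively
axiomatized consistent extension `T` of `PA` proves
`Con^R(T) := ¬Pr^R_T(⌜0≠0⌝)`. -/
theorem rosser_consistency_provable (T : Larith.Theory)
    (hPA : PA ⊆ T) (hRec : RecursivelyAxiomatized T) (hCons : Consistent T)
    (Prf NegF : Larith.Formula (Fin 2))
    (hRep : ∀ φ : Larith.Sentence,
      Proves T φ ↔ ∃ n : ℕ, TrueInN (substNum2 Prf (gnum φ) n))
    (hRepNum : ∀ k n : ℕ,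
      (TrueInN (substNum2 Prf k n) → Proves T (substNum2 Prf k n)) ∧
      (¬ TrueInN (substNum2 Prf k n) → Proves T ∼(substNum2 Prf k n)))
    (hUniq : ∀ k k' n : ℕ,
      TrueInN (substNum2 Prf k n) → TrueInN (substNum2 Prf k' n) → k = k')
    (hNeg : ∀ (φ : Larith.Sentence) (n : ℕ),
      TrueInN (substNum2 NegF (gnum φ) n) ↔ n = gnum (∼φ))
    (hNegNum : ∀ k n : ℕ,
      (TrueInN (substNum2 NegF k n) → Proves T (substNum2 NegF k n)) ∧
      (¬ TrueInN (substNum2 NegF k n) → Proves T ∼(substNum2 NegF k n)))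
    :
    Proves T ∼(substNum (rosserPr Prf NegF) (gnum falseEq)) := by
  intro M v xs
  rw [BoundedFormula.realize_not]
  intro hpos
  set c := gnum falseEq with hc
  set d := gnum (∼falseEq) with hd
  -- the positive realization as a sentence
  have hsent : (M : Type) ⊨ substNum (rosserPr Prf NegF) c := by
    rw [Sentence.Realize, Formula.Realize, Subsingleton.elim (default : Empty → M) v,
      Subsingleton.elim (default : Fin 0 → M) xs]
    exact hpos
  -- T proves ¬falseEq
  have hTneg : Proves T (∼falseEq) := by
    intro N v' xs'
    simp [falseEq]
  -- T does not prove falseEq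
  have hnotfalse : ¬ Proves T falseEq := by
    intro hf
    apply hCons
    intro N v' xs'
    have := hf N v' xs'
    simp [falseEq] at this
  obtain ⟨n₀, hn₀⟩ := (hRep (∼falseEq)).1 hTneg
  -- in M : Prf(d, n₀) holds
  have hPrfNegM : Prf.Realize (M := M) ![NmM M d, NmM M n₀] :=
    (realize_substNum2 Prf d n₀).1 (proves_realize ((hRepNum d n₀).1 hn₀) M)
  -- in M : ¬Prf(c, k) for every k
  have hNoPrfM : ∀ k : ℕ, ¬ Prf.Realize (M := M) ![NmM M c, NmM M k] := by
    intro k hk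
    have hnT : ¬ TrueInN (substNum2 Prf c k) := fun ht => hnotfalse ((hRep falseEq).2 ⟨k, ht⟩)
    have := proves_realize ((hRepNum c k).2 hnT) M
    rw [Sentence.Realize, Formula.Realize, BoundedFormula.realize_not] at this
    exact this ((realize_substNum2 Prf c k).2 hk)
  -- in M : NegF(c, d) holds
  have hNegM : NegF.Realize (M := M) ![NmM M c, NmM M d] :=
    (realize_substNum2 NegF c d).1
      (proves_realize ((hNegNum c d).1 ((hNeg falseEq d).2 rfl)) M)
  -- PA facts in M
  have hq4 : (M : Type) ⊨ q4 := pa_realize hPA M q4_mem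
  have hq5 : (M : Type) ⊨ q5 := pa_realize hPA M q5_mem
  have hi1 : (M : Type) ⊨ indAxiom 0 psiZeroAdd := pa_realize hPA M (ind_mem 0 psiZeroAdd)
  have hi2 : (M : Type) ⊨ indAxiom 0 psiCases := pa_realize hPA M (ind_mem 0 psiCases)
  have hi3 : (M : Type) ⊨ indAxiom 1 psiSuccAdd := pa_realize hPA M (ind_mem 1 psiSuccAdd)
  obtain ⟨a, hPa, hAll⟩ := realize_rosser Prf NegF c hsent
  rcases dichotomy_M hq4 hq5 hi1 hi2 hi3 n₀ a with ⟨w, hw⟩ | ⟨k, hk⟩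
  · exact hAll (NmM M n₀) ⟨w, hw⟩ (NmM M d) hNegM hPrfNegM
  · exact hNoPrfM k (hk ▸ hPa)
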